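/- arXiv:1404.7643 — 5 statements merged into one kernel-verified Lean document; each statement's English description precedes it below -/
import Mathlib

section
/- Let ι be a nonempty finite index set, let p > 0 be a real number, and let c : ι → ℝ and t : ι → ℝ be families of strictly positive reals with ∑_{i∈ι} t_i = T. Then ∑_{i∈ι} c_i · t_i^{-p} ≥ T^{-p} · (∑_{i∈ι} c_i^{1/(1+p)})^{1+p}. -/
open Finset

/-- Core inequality behind the optimal rate-allocation Lemma 1: for positive weights `c` and
positive variables `t` summing to `T`, the weighted sum of negative powers is bounded below
by the Hölder-type allocation value. -/
theorem sum_weighted_rpow_neg_ge {ι : Type*} [Fintype ι] [Nonempty ι]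
    (p : ℝ) (hp : 0 < p) (c t : ι → ℝ) (hc : ∀ i, 0 < c i) (ht : ∀ i, 0 < t i)
    (T : ℝ) (hT : ∑ i, t i = T) :
    ∑ i, c i * t i ^ (-p) ≥ T ^ (-p) * (∑ i, c i ^ (1 / (1 + p))) ^ (1 + p) := by
  have h1p : (0:ℝ) < 1 + p := by linarith
  have hr0 : (1 + p : ℝ) ≠ 0 := ne_of_gt h1p
  have hTpos : 0 < T := hT ▸ Finset.sum_pos (fun i _ => ht i) univ_nonempty
  set r : ℝ := 1 + p with hr
  set q : ℝ := (1 + p) / p with hq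
  have hconj : r.HolderConjugate q := by
    exact (Real.holderConjugate_iff_eq_conjExponent (by rw [hr]; linarith)).2
      (by rw [hr, hq, add_sub_cancel_left])
  set f : ι → ℝ := fun i => c i ^ (1 / r) * t i ^ (-(p / r)) with hf
  set g : ι → ℝ := fun i => t i ^ (p / r) with hg
  have key := Real.inner_le_Lp_mul_Lq_of_nonneg (s := (univ : Finset ι)) hconj
    (f := f) (g := g)
    (fun i _ => mul_nonneg (Real.rpow_nonneg (hc i).le _) (Real.rpow_nonneg (ht i).le _))
    (fun i _ => Real.rpow_nonneg (ht i).le _)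
  have hfg : ∀ i, f i * g i = c i ^ (1 / r) := by
    intro i
    simp only [hf, hg, mul_assoc]
    rw [← Real.rpow_add (ht i)]
    simp
  have hfr : ∀ i, f i ^ r = c i * t i ^ (-p) := by
    intro i
    simp only [hf]
    rw [Real.mul_rpow (Real.rpow_nonneg (hc i).le _) (Real.rpow_nonneg (ht i).le _),
      ← Real.rpow_mul (hc i).le, ← Real.rpow_mul (ht i).le,
      one_div_mul_cancel hr0, Real.rpow_one,
      show -(p / r) * r = -p by field_simp]
  have hgq : ∀ i, g i ^ q = t i := by
    intro i
    simp only [hg]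
    rw [← Real.rpow_mul (ht i).le]
    rw [hr, hq]
    rw [show p / (1 + p) * ((1 + p) / p) = 1 by field_simp]
    exact Real.rpow_one _
  simp only [hfg, hfr, hgq, hT] at key
  -- key : ∑ c^{1/r} ≤ (∑ c t^{-p}) ^ (1/r) * T ^ (1/q)
  set S : ℝ := ∑ i, c i ^ (1 / r) with hS
  set A : ℝ := ∑ i, c i * t i ^ (-p) with hA
  have hApos : 0 < A := Finset.sum_pos
    (fun i _ => mul_pos (hc i) (Real.rpow_pos_of_pos (ht i) _)) univ_nonempty
  have hSnn : 0 ≤ S := Finset.sum_nonneg fun i _ => Real.rpow_nonneg (hc i).le _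
  have h1q : 1 / q = p / r := by rw [hr, hq]; field_simp
  have key2 : S ^ r ≤ A * T ^ p := by
    calc S ^ r ≤ (A ^ (1/r) * T ^ (1/q)) ^ r :=
          Real.rpow_le_rpow hSnn key h1p.le
      _ = A * T ^ p := by
          rw [Real.mul_rpow (Real.rpow_nonneg hApos.le _) (Real.rpow_nonneg hTpos.le _),
            ← Real.rpow_mul hApos.le, ← Real.rpow_mul hTpos.le,
            one_div_mul_cancel hr0, Real.rpow_one, h1q,
            div_mul_cancel₀ _ hr0]
  rw [ge_iff_le, Real.rpow_neg hTpos.le, ← div_eq_inv_mul, div_le_iff₀ (Real.rpow_pos_of_pos hTpos p)]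
  exact key2
end

section
/- Let ι be a nonempty finite index set, let p > 0 be a real number, let c : ι → ℝ be strictly positive, let T > 0, let S = ∑_{j∈ι} c_j^{1/(1+p)}, and define t*_i = T · c_i^{1/(1+p)} / S for each i. Then t*_i > 0 for all i, ∑_{i∈ι} t*_i = T, and ∑_{i∈ι} c_i · (t*_i)^{-p} = T^{-p} · S^{1+p}. -/
open Finset

/-- Attainment part of the optimal rate-allocation Lemma 1: the explicit allocation
`t*_i = T · c_i^{1/(1+p)} / S` is positive, feasible (sums to `T`), and achieves the value
`T^{-p} · S^{1+p}` where `S = ∑ c_j^{1/(1+p)}`. -/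
theorem optimal_allocation_attains {ι : Type*} [Fintype ι] [Nonempty ι]
    (p : ℝ) (hp : 0 < p) (c : ι → ℝ) (hc : ∀ i, 0 < c i) (T : ℝ) (hT : 0 < T)
    (S : ℝ) (hS : S = ∑ j, c j ^ (1 / (1 + p)))
    (tstar : ι → ℝ) (htstar : ∀ i, tstar i = T * c i ^ (1 / (1 + p)) / S) :
    (∀ i, 0 < tstar i) ∧ (∑ i, tstar i = T) ∧
      ∑ i, c i * tstar i ^ (-p) = T ^ (-p) * S ^ (1 + p) := by
  have h1p : (0:ℝ) < 1 + p := by linarith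
  have hSpos : 0 < S := by
    rw [hS]
    exact Finset.sum_pos (fun j _ => Real.rpow_pos_of_pos (hc j) _) univ_nonempty
  have hpos : ∀ i, 0 < tstar i := fun i => by
    have := Real.rpow_pos_of_pos (hc i) (1 / (1 + p))
    rw [htstar i]; positivity
  refine ⟨hpos, ?_, ?_⟩
  · have : ∑ i, tstar i = T * S / S := by
      rw [Finset.sum_congr rfl fun i (_ : i ∈ univ) => htstar i,
        ← Finset.sum_div, ← Finset.mul_sum, ← hS]
    rw [this, mul_div_assoc, div_self hSpos.ne', mul_one]
  · have key : ∀ i, c i * tstar i ^ (-p) = T ^ (-p) * S ^ p * c i ^ (1 / (1 + p)) := by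
      intro i
      have hci := hc i
      have hcp : (0:ℝ) < c i ^ (1 / (1 + p)) := Real.rpow_pos_of_pos hci _
      have h1 : tstar i ^ (-p)
          = T ^ (-p) * c i ^ ((1 / (1 + p)) * (-p)) / S ^ (-p) := by
        rw [htstar i, Real.div_rpow (by positivity) hSpos.le,
          Real.mul_rpow hT.le hcp.le, ← Real.rpow_mul hci.le]
      have h2 : S ^ (-p) = (S ^ p)⁻¹ := by
        rw [Real.rpow_neg hSpos.le]
      have hexp : 1 + (1 / (1 + p)) * (-p) = 1 / (1 + p) := by
        field_simp
        ring
      have h3 : c i * c i ^ ((1 / (1 + p)) * (-p)) = c i ^ (1 / (1 + p)) := by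
        nth_rewrite 1 [← Real.rpow_one (c i)]
        rw [← Real.rpow_add hci, hexp]
      rw [h1, h2, div_eq_mul_inv, inv_inv]
      calc c i * (T ^ (-p) * c i ^ ((1 / (1 + p)) * (-p)) * S ^ p)
          = T ^ (-p) * S ^ p * (c i * c i ^ ((1 / (1 + p)) * (-p))) := by ring
        _ = T ^ (-p) * S ^ p * c i ^ (1 / (1 + p)) := by rw [h3]
    calc ∑ i, c i * tstar i ^ (-p)
        = ∑ i, T ^ (-p) * S ^ p * c i ^ (1 / (1 + p)) := by
          exact Finset.sum_congr rfl fun i _ => key i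
      _ = T ^ (-p) * S ^ p * S := by rw [← Finset.mul_sum, ← hS]
      _ = T ^ (-p) * S ^ (1 + p) := by
          rw [mul_assoc]
          congr 1
          rw [Real.rpow_add hSpos, Real.rpow_one, mul_comm]
end

section
/- (Lemma 1) Let N ≥ 1 be a natural number, let V_{2,N} = 2 · ((N/2) · Γ(N/2))^{2/N} · ((N+2)/N)^{N/2} (a positive real constant, Γ the real Gamma function), let ι be a nonempty finite index set, let ω : ι → ℝ be strictly positive weights, let M_i (i ∈ ι) be N×N real positive definite matrices (so det M_i > 0), and let b_t ∈ ℝ. For a rate allocation b : ι → ℝ define Δ₂(b) = ∑_{i∈ι} ω_i · (2^{b_i})^{-2/N} · V_{2,N} · (det M_i)^{1/N}. Set u_i = (ω_i · (det M_i)^{1/N})^{N/(N+2)} and S = ∑_{j∈ι} u_j, and define b*_i by 2^{b*_i} = 2^{b_t} · u_i / S. Then: (a) ∑_{i∈ι} 2^{b*_i} = 2^{b_t}; (b) for every b : ι → ℝ with ∑_{i∈ι} 2^{b_i} = 2^{b_t}, one has Δ₂(b) ≥ (2^{b_t})^{-2/N} · V_{2,N} · S^{(N+2)/N}; and (c) Δ₂(b*)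 = (2^{b_t})^{-2/N} · V_{2,N} · S^{(N+2)/N}. -/
open Finset

/-- Lemma 1 of the paper: optimal rate allocation for the high-rate GMM vector quantizer.
`Δ₂(b) = ∑ i, ω_i (2^{b_i})^{-2/N} V_{2,N} (det M_i)^{1/N}` is minimized, under the total-rate
constraint `∑ i, 2^{b_i} = 2^{b_t}`, by the allocation `2^{b*_i} = 2^{b_t} u_i / S`, with minimum
value `(2^{b_t})^{-2/N} V_{2,N} S^{(N+2)/N}` where `u_i = (ω_i (det M_i)^{1/N})^{N/(N+2)}` and
`S = ∑ u_j`. -/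
theorem optimal_rate_allocation_lemma1 (N : ℕ) (hN : 1 ≤ N)
    (V : ℝ)
    (hV : V = 2 * (((N : ℝ) / 2) * Real.Gamma ((N : ℝ) / 2)) ^ ((2 : ℝ) / N) *
      (((N : ℝ) + 2) / (N : ℝ)) ^ ((N : ℝ) / 2))
    {ι : Type*} [Fintype ι] [Nonempty ι]
    (ω : ι → ℝ) (hω : ∀ i, 0 < ω i)
    (M : ι → Matrix (Fin N) (Fin N) ℝ) (hM : ∀ i, (M i).PosDef)
    (bt : ℝ)
    (Δ : (ι → ℝ) → ℝ)
    (hΔ : ∀ b : ι → ℝ,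
      Δ b = ∑ i, ω i * ((2 : ℝ) ^ (b i)) ^ (-(2 : ℝ) / N) * V * (M i).det ^ ((1 : ℝ) / N))
    (u : ι → ℝ) (hu : ∀ i, u i = (ω i * (M i).det ^ ((1 : ℝ) / N)) ^ ((N : ℝ) / ((N : ℝ) + 2)))
    (S : ℝ) (hS : S = ∑ j, u j)
    (bstar : ι → ℝ) (hbstar : ∀ i, (2 : ℝ) ^ (bstar i) = (2 : ℝ) ^ bt * u i / S) :
    (∑ i, (2 : ℝ) ^ (bstar i) = (2 : ℝ) ^ bt) ∧
    (∀ b : ι → ℝ, (∑ i, (2 : ℝ) ^ (b i) = (2 : ℝ) ^ bt) →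
      Δ b ≥ ((2 : ℝ) ^ bt) ^ (-(2 : ℝ) / N) * V * S ^ (((N : ℝ) + 2) / N)) ∧
    Δ bstar = ((2 : ℝ) ^ bt) ^ (-(2 : ℝ) / N) * V * S ^ (((N : ℝ) + 2) / N) := by
  have hN1 : (1:ℝ) ≤ (N:ℝ) := by exact_mod_cast hN
  have hNpos : (0:ℝ) < (N:ℝ) := by linarith
  set α : ℝ := 2 / N with hα
  have hαpos : 0 < α := by positivity
  have hN2 : ((N:ℝ) + 2) ≠ 0 := by positivity
  set X : ℝ := (2:ℝ) ^ bt with hXdef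
  have hX : (0:ℝ) < X := Real.rpow_pos_of_pos two_pos bt
  have hd : ∀ i, 0 < (M i).det ^ ((1:ℝ)/N) :=
    fun i => Real.rpow_pos_of_pos (hM i).det_pos _
  have ha : ∀ i, 0 < ω i * (M i).det ^ ((1:ℝ)/N) := fun i => mul_pos (hω i) (hd i)
  have hupos : ∀ i, 0 < u i := fun i => by
    rw [hu i]; exact Real.rpow_pos_of_pos (ha i) _
  have hSpos : 0 < S := by
    rw [hS]; exact Finset.sum_pos (fun i _ => hupos i) Finset.univ_nonempty
  -- exponent identities
  have hexp1 : ((N:ℝ)+2)/N = 1 + α := by rw [hα]; field_simp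
  have hexp2 : -(2:ℝ)/N = -α := by rw [hα]; ring
  have hexp3 : (N:ℝ)/((N:ℝ)+2) = 1/(1+α) := by
    rw [show (1:ℝ) + α = ((N:ℝ)+2)/N by rw [hα]; field_simp, one_div_div]
  have hVpos : 0 < V := by
    rw [hV]
    have h1 : 0 < ((N:ℝ)/2) * Real.Gamma ((N:ℝ)/2) :=
      mul_pos (by positivity) (Real.Gamma_pos_of_pos (by positivity))
    exact mul_pos (mul_pos two_pos (Real.rpow_pos_of_pos h1 _))
      (Real.rpow_pos_of_pos (by positivity) _)
  -- part (a)
  have parta : ∑ i, (2:ℝ) ^ (bstar i) = X := by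
    simp only [hbstar]
    rw [← Finset.sum_div, ← Finset.mul_sum, ← hS, mul_div_assoc, div_self hSpos.ne',
      mul_one]
  -- key scalar identity: a_i * u_i^{-α} = u_i
  have hau : ∀ i, (ω i * (M i).det ^ ((1:ℝ)/N)) * (u i) ^ (-α) = u i := by
    intro i
    rw [hu i, ← Real.rpow_mul (ha i).le]
    have he : (N:ℝ)/((N:ℝ)+2) = 1 + ((N:ℝ)/((N:ℝ)+2)) * (-α) := by
      rw [hα]; field_simp; ring
    calc (ω i * (M i).det ^ ((1:ℝ)/N))
          * (ω i * (M i).det ^ ((1:ℝ)/N)) ^ ((N:ℝ)/((N:ℝ)+2) * (-α))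
        = (ω i * (M i).det ^ ((1:ℝ)/N)) ^ (1:ℝ)
          * (ω i * (M i).det ^ ((1:ℝ)/N)) ^ ((N:ℝ)/((N:ℝ)+2) * (-α)) := by
          rw [Real.rpow_one]
      _ = (ω i * (M i).det ^ ((1:ℝ)/N)) ^ (1 + (N:ℝ)/((N:ℝ)+2) * (-α)) :=
          (Real.rpow_add (ha i) _ _).symm
      _ = (ω i * (M i).det ^ ((1:ℝ)/N)) ^ ((N:ℝ)/((N:ℝ)+2)) := by rw [← he]
  -- part (c)
  have partc : Δ bstar = X ^ (-α) * V * S ^ (1+α) := by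
    rw [hΔ]
    have hterm : ∀ i, ω i * ((2:ℝ) ^ (bstar i)) ^ (-(2:ℝ)/N) * V * (M i).det ^ ((1:ℝ)/N)
        = V * X ^ (-α) * S ^ α * u i := by
      intro i
      rw [hexp2, hbstar i, Real.div_rpow (mul_pos hX (hupos i)).le hSpos.le,
        Real.mul_rpow hX.le (hupos i).le, Real.rpow_neg hSpos.le, div_eq_mul_inv, inv_inv]
      calc ω i * (X ^ (-α) * u i ^ (-α) * S ^ α) * V * (M i).det ^ ((1:ℝ)/N)
          = V * X ^ (-α) * S ^ α * ((ω i * (M i).det ^ ((1:ℝ)/N)) * (u i) ^ (-α)) := by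
            ring
        _ = V * X ^ (-α) * S ^ α * u i := by rw [hau i]
    calc (∑ i, ω i * ((2:ℝ) ^ (bstar i)) ^ (-(2:ℝ)/N) * V * (M i).det ^ ((1:ℝ)/N))
        = ∑ i, V * X ^ (-α) * S ^ α * u i := Finset.sum_congr rfl fun i _ => hterm i
      _ = V * X ^ (-α) * S ^ α * S := by rw [← Finset.mul_sum, ← hS]
      _ = X ^ (-α) * V * S ^ (1+α) := by
          rw [Real.rpow_add hSpos, Real.rpow_one]; ring
  -- part (b)
  have partb : ∀ b : ι → ℝ, (∑ i, (2:ℝ) ^ (b i) = X) →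
      Δ b ≥ X ^ (-α) * V * S ^ (1+α) := by
    intro b hb
    set x : ι → ℝ := fun i => (2:ℝ) ^ (b i) with hx
    have hxpos : ∀ i, 0 < x i := fun i => Real.rpow_pos_of_pos two_pos _
    set p : ℝ := 1 + α with hp
    set q : ℝ := (1 + α) / α with hq
    have hppos : 0 < p := by rw [hp]; linarith
    have hqpos : 0 < q := by rw [hq]; positivity
    have hpq : p.HolderConjugate q := by
      rw [Real.holderConjugate_iff]; constructor
      · rw [hp]; linarith
      · rw [hp, hq]; field_simp
    set T : ℝ := ∑ i, (ω i * (M i).det ^ ((1:ℝ)/N)) * (x i) ^ (-α) with hT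
    have hTpos : 0 < T := Finset.sum_pos
      (fun i _ => mul_pos (ha i) (Real.rpow_pos_of_pos (hxpos i) _)) Finset.univ_nonempty
    set f : ι → ℝ := fun i => ((ω i * (M i).det ^ ((1:ℝ)/N)) * (x i) ^ (-α)) ^ (1/p) with hf
    set g : ι → ℝ := fun i => (x i) ^ (1/q) with hg
    have hfpos : ∀ i, 0 < f i := fun i =>
      Real.rpow_pos_of_pos (mul_pos (ha i) (Real.rpow_pos_of_pos (hxpos i) _)) _
    have hgpos : ∀ i, 0 < g i := fun i => Real.rpow_pos_of_pos (hxpos i) _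
    have hfp : ∀ i, |f i| ^ p = (ω i * (M i).det ^ ((1:ℝ)/N)) * (x i) ^ (-α) := by
      intro i
      rw [abs_of_pos (hfpos i), hf, ← Real.rpow_mul
        (mul_pos (ha i) (Real.rpow_pos_of_pos (hxpos i) _)).le,
        one_div_mul_cancel hppos.ne', Real.rpow_one]
    have hgq : ∀ i, |g i| ^ q = x i := by
      intro i
      rw [abs_of_pos (hgpos i), hg, ← Real.rpow_mul (hxpos i).le,
        one_div_mul_cancel hqpos.ne', Real.rpow_one]
    have hfg : ∀ i, f i * g i = u i := by
      intro i
      simp only [hf, hg]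
      rw [hu i,
        Real.mul_rpow (ha i).le (Real.rpow_nonneg (hxpos i).le _),
        ← Real.rpow_mul (hxpos i).le, mul_assoc, ← Real.rpow_add (hxpos i)]
      rw [show -α * (1/p) + 1/q = 0 from by rw [hp, hq]; field_simp; ring,
        Real.rpow_zero, mul_one, hexp3, hp]
    have holder := Real.inner_le_Lp_mul_Lq (Finset.univ : Finset ι) f g hpq
    rw [Finset.sum_congr rfl (fun i _ => hfg i),
      Finset.sum_congr rfl (fun i _ => hfp i),
      Finset.sum_congr rfl (fun i _ => hgq i), ← hS, ← hT, hb] at holder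
    -- holder : S ≤ T^(1/p) * X^(1/q)
    have h2 : S ^ p ≤ T * X ^ α := by
      have := Real.rpow_le_rpow hSpos.le holder hppos.le
      rwa [Real.mul_rpow (Real.rpow_nonneg hTpos.le _) (Real.rpow_nonneg hX.le _),
        ← Real.rpow_mul hTpos.le, one_div_mul_cancel hppos.ne', Real.rpow_one,
        ← Real.rpow_mul hX.le,
        show 1/q * p = α from by rw [hp, hq]; field_simp] at this
    have h3 : X ^ (-α) * S ^ p ≤ T := by
      rw [Real.rpow_neg hX.le]
      rw [inv_mul_le_iff₀ (Real.rpow_pos_of_pos hX α)]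
      linarith
    have hΔb : Δ b = V * T := by
      rw [hΔ b, hT, Finset.mul_sum]
      exact Finset.sum_congr rfl fun i _ => by rw [hexp2]; ring
    rw [hΔb, ge_iff_le]
    have := mul_le_mul_of_nonneg_left h3 hVpos.le
    linarith
  refine ⟨parta, fun b hb => ?_, ?_⟩
  · rw [hexp1, hexp2]; exact partb b hb
  · rw [hexp1, hexp2]; exact partc
end

section
/- Let N ≥ 1 be a natural number, ι a nonempty finite index set, ω : ι → ℝ and c : ι → ℝ strictly positive families, T > 0. Set u_i = (ω_i c_i)^{N/(N+2)}, S = ∑_{j∈ι} u_j, and t*_i = T · u_i / S. Then ∑_{i∈ι} ω_i · c_i² · (t*_i)^{-4/N} = T^{-4/N} · S^{4/N} · ∑_{i∈ι} ω_i^{(N-2)/(N+2)} · c_i^{2N/(N+2)}. -/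
open Finset

/-- The fourth-moment high-rate distortion evaluated at the optimal rate allocation of Lemma 1:
with `u_i = (ω_i c_i)^{N/(N+2)}`, `S = ∑ u_j` and `t*_i = T u_i / S`, one has
`∑ i, ω_i c_i² (t*_i)^{-4/N} = T^{-4/N} S^{4/N} ∑ i, ω_i^{(N-2)/(N+2)} c_i^{2N/(N+2)}`. -/
theorem delta4_at_optimal_allocation (N : ℕ) (hN : 1 ≤ N)
    {ι : Type*} [Fintype ι] [Nonempty ι]
    (ω c : ι → ℝ) (hω : ∀ i, 0 < ω i) (hc : ∀ i, 0 < c i)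
    (T : ℝ) (hT : 0 < T)
    (u : ι → ℝ) (hu : ∀ i, u i = (ω i * c i) ^ ((N : ℝ) / ((N : ℝ) + 2)))
    (S : ℝ) (hS : S = ∑ j, u j)
    (tstar : ι → ℝ) (ht : ∀ i, tstar i = T * u i / S) :
    ∑ i, ω i * c i ^ 2 * tstar i ^ (-(4 : ℝ) / N)
      = T ^ (-(4 : ℝ) / N) * S ^ ((4 : ℝ) / N) *
        ∑ i, ω i ^ (((N : ℝ) - 2) / ((N : ℝ) + 2)) * c i ^ ((2 * (N : ℝ)) / ((N : ℝ) + 2)) := by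
  have hN0 : (0:ℝ) < (N:ℝ) := by exact_mod_cast hN
  have hN2 : (0:ℝ) < (N:ℝ) + 2 := by positivity
  have hu0 : ∀ i, 0 < u i := fun i => by have h1 := hω i; have h2 := hc i; rw [hu i]; positivity
  have hS0 : 0 < S := by
    rw [hS]; exact Finset.sum_pos (fun i _ => hu0 i) univ_nonempty
  rw [mul_assoc, Finset.mul_sum, Finset.mul_sum]
  refine Finset.sum_congr rfl fun i _ => ?_
  rw [ht i, hu i]
  have hωc : (0:ℝ) < ω i * c i := mul_pos (hω i) (hc i)
  rw [mul_div_assoc, Real.mul_rpow hT.le (by positivity),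
      Real.div_rpow (by positivity) hS0.le,
      ← Real.rpow_mul hωc.le,
      Real.mul_rpow (hω i).le (hc i).le,
      show ((N:ℝ)-2)/((N:ℝ)+2) = 1 + (N:ℝ)/((N:ℝ)+2) * (-(4:ℝ)/N) by field_simp; ring,
      show (2*(N:ℝ))/((N:ℝ)+2) = 2 + (N:ℝ)/((N:ℝ)+2) * (-(4:ℝ)/N) by field_simp; ring,
      Real.rpow_add (hω i), Real.rpow_add (hc i), Real.rpow_one,
      show ((2:ℝ)) = ((2:ℕ):ℝ) by norm_num, Real.rpow_natCast,
      neg_div, Real.rpow_neg hS0.le]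
  field_simp
end

section
/- (Block BPDN, exactly block-sparse case) Let Q, R, N, K ≥ 1 be natural numbers with M = Q·R, and view vectors x ∈ ℝ^M as R blocks x_1, …, x_R ∈ ℝ^Q. Call z ∈ ℝ^M block K-sparse if at most K of its blocks are nonzero. Let A be an N×M real matrix and let δ ∈ (0, √2 − 1) be such that (1 − δ)‖z‖₂² ≤ ‖A z‖₂² ≤ (1 + δ)‖z‖₂² for every block 2K-sparse z ∈ ℝ^M. Let x ∈ ℝ^M be block K-sparse, let n ∈ ℝ^N with ‖n‖₂ ≤ ε, let y = A x + n, and let x̂ be any minimizer of ∑_{r=1}^R ‖z_r‖₂ over {z ∈ ℝ^M : ‖y − A z‖₂ ≤ ε}. Then ‖x − x̂‖₂ ≤ (4 ε √(1 + δ)) / (1 − (1 + √2) δ). -/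
open Finset

/-- The Euclidean (ℓ₂) norm of a finitely-indexed real vector. -/
noncomputable def euclNorm {ι : Type*} [Fintype ι] (z : ι → ℝ) : ℝ :=
  Real.sqrt (∑ i, z i ^ 2)

/-- A vector of `ℝ^{Q·R}`, indexed by block `r ∈ Fin R` and within-block position `q ∈ Fin Q`,
is block `K`-sparse if at most `K` of its `R` blocks are nonzero. -/
def BlockSparse (Q R K : ℕ) (z : Fin R × Fin Q → ℝ) : Prop :=
  {r : Fin R | ∃ q, z (r, q) ≠ 0}.ncard ≤ K

namespace BPDN

variable {ι : Type*} [Fintype ι]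

lemma euclNorm_nonneg (z : ι → ℝ) : 0 ≤ euclNorm z := Real.sqrt_nonneg _

lemma sq_euclNorm (z : ι → ℝ) : euclNorm z ^ 2 = ∑ i, z i ^ 2 :=
  Real.sq_sqrt (Finset.sum_nonneg fun _ _ => sq_nonneg _)

lemma euclNorm_eq_norm (z : ι → ℝ) :
    euclNorm z = ‖((WithLp.equiv 2 (ι → ℝ)).symm z : EuclideanSpace ℝ ι)‖ := by
  rw [EuclideanSpace.norm_eq]
  unfold euclNorm
  congr 1
  refine Finset.sum_congr rfl fun i _ => ?_
  simp [Real.norm_eq_abs, sq_abs]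

lemma euclNorm_zero : euclNorm (0 : ι → ℝ) = 0 := by simp [euclNorm]

lemma euclNorm_neg' (z : ι → ℝ) : euclNorm (-z) = euclNorm z := by simp [euclNorm]

lemma euclNorm_add_le (z w : ι → ℝ) : euclNorm (z + w) ≤ euclNorm z + euclNorm w := by
  rw [euclNorm_eq_norm, euclNorm_eq_norm, euclNorm_eq_norm]
  exact norm_add_le ((WithLp.equiv 2 (ι → ℝ)).symm z) ((WithLp.equiv 2 (ι → ℝ)).symm w)

lemma euclNorm_sub_le (z w : ι → ℝ) : euclNorm (z - w) ≤ euclNorm z + euclNorm w := by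
  rw [sub_eq_add_neg]
  exact (euclNorm_add_le z (-w)).trans (by rw [euclNorm_neg'])

lemma euclNorm_sum_le {α : Type*} (s : Finset α) (f : α → ι → ℝ) :
    euclNorm (∑ a ∈ s, f a) ≤ ∑ a ∈ s, euclNorm (f a) := by
  classical
  induction s using Finset.induction with
  | empty => simp [euclNorm_zero]
  | insert _ _ hnot ih =>
    rw [Finset.sum_insert hnot, Finset.sum_insert hnot]
    exact (euclNorm_add_le _ _).trans (by linarith)

lemma eq_zero_of_euclNorm_eq_zero {z : ι → ℝ} (hz : euclNorm z = 0) : z = 0 := by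
  have h1 : (∑ i, z i ^ 2) = 0 := by
    have := sq_euclNorm z
    rw [hz] at this; simpa using this.symm
  funext i
  have := (Finset.sum_eq_zero_iff_of_nonneg (fun i _ => sq_nonneg (z i))).1 h1 i (Finset.mem_univ i)
  exact pow_eq_zero_iff (n := 2) (by norm_num) |>.1 this

lemma abs_inner_le (z w : ι → ℝ) : |∑ i, z i * w i| ≤ euclNorm z * euclNorm w := by
  rw [euclNorm_eq_norm, euclNorm_eq_norm]
  have h := abs_real_inner_le_norm ((WithLp.equiv 2 (ι → ℝ)).symm z)
    ((WithLp.equiv 2 (ι → ℝ)).symm w)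
  rw [PiLp.inner_apply] at h
  simpa [RCLike.inner_apply, starRingEnd_apply, mul_comm] using h

lemma le_of_sq_le_sq {a b : ℝ} (hb : 0 ≤ b) (h : a ^ 2 ≤ b ^ 2) : a ≤ b := by nlinarith

/-- every member of a list lies in one of the `K`-chunks -/
lemma exists_chunk {α : Type*} (K : ℕ) :
    ∀ (J : ℕ) (l : List α) (r : α), r ∈ l → l.length ≤ J * K →
      ∃ j < J, r ∈ (l.drop (j * K)).take K := by
  intro J
  induction J with
  | zero =>
    intro l r hr hlen
    simp at hlen
    subst hlen
    simp at hr
  | succ J ih =>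
    intro l r hr hlen
    rw [← List.take_append_drop K l] at hr
    rcases List.mem_append.1 hr with hmem | hmem
    · exact ⟨0, Nat.succ_pos J, by simpa using hmem⟩
    · obtain ⟨j, hj, hmem'⟩ := ih (l.drop K) r hmem
        (by
          rw [List.length_drop]
          have hJK : (J + 1) * K = J * K + K := by ring
          exact Nat.sub_le_iff_le_add.2 (by rw [← hJK]; exact hlen))
      refine ⟨j + 1, Nat.succ_lt_succ hj, ?_⟩
      rw [List.drop_drop] at hmem'
      have : K + j * K = (j + 1) * K := by ring
      rwa [this] at hmem'

lemma pairwise_take_drop {α : Type*} {r : α → α → Prop} {l : List α} (h : l.Pairwise r)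
    (n : ℕ) : ∀ a ∈ l.take n, ∀ b ∈ l.drop n, r a b := by
  have h' : (l.take n ++ l.drop n).Pairwise r := by rwa [List.take_append_drop]
  exact (List.pairwise_append.1 h').2.2

variable {Q R : ℕ}

/-- block norm -/
noncomputable def bn (h : Fin R × Fin Q → ℝ) (r : Fin R) : ℝ := euclNorm fun q => h (r, q)

lemma bn_nonneg (h : Fin R × Fin Q → ℝ) (r : Fin R) : 0 ≤ bn h r := Real.sqrt_nonneg _

/-- restriction of a vector to a set of blocks -/
def res (S : Finset (Fin R)) (h : Fin R × Fin Q → ℝ) : Fin R × Fin Q → ℝ :=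
  fun p => if p.1 ∈ S then h p else 0

lemma res_support {S : Finset (Fin R)} {h : Fin R × Fin Q → ℝ} {p : Fin R × Fin Q}
    (hp : res S h p ≠ 0) : p.1 ∈ S := by
  by_contra hc; simp [res, hc] at hp

lemma sum_sq_res (S : Finset (Fin R)) (h : Fin R × Fin Q → ℝ) :
    ∑ p, (res S h p) ^ 2 = ∑ r ∈ S, (bn h r) ^ 2 := by
  classical
  have hblock : ∀ r : Fin R, ∑ q, (res S h (r, q)) ^ 2
      = if r ∈ S then (bn h r) ^ 2 else 0 := by
    intro r
    by_cases hr : r ∈ S <;> simp [res, hr, bn, sq_euclNorm]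
  rw [Fintype.sum_prod_type]
  simp only [hblock]
  rw [Finset.sum_ite_mem, Finset.univ_inter]

lemma euclNorm_res_sq (S : Finset (Fin R)) (h : Fin R × Fin Q → ℝ) :
    euclNorm (res S h) ^ 2 = ∑ r ∈ S, (bn h r) ^ 2 := by
  rw [sq_euclNorm, sum_sq_res]

lemma res_union {S T : Finset (Fin R)} (hST : Disjoint S T) (h : Fin R × Fin Q → ℝ) :
    res (S ∪ T) h = res S h + res T h := by
  funext p
  by_cases hS : p.1 ∈ S
  · have hT : p.1 ∉ T := Finset.disjoint_left.1 hST hS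
    simp [res, hS, hT]
  · by_cases hT : p.1 ∈ T <;> simp [res, hS, hT]

lemma blockSparse_of_support {S : Finset (Fin R)} {k : ℕ} (hcard : S.card ≤ k)
    {z : Fin R × Fin Q → ℝ} (hz : ∀ p, z p ≠ 0 → p.1 ∈ S) : BlockSparse Q R k z := by
  refine le_trans ?_ (le_trans (le_of_eq (Set.ncard_coe_finset S)) hcard)
  refine Set.ncard_le_ncard ?_ S.finite_toSet
  rintro r ⟨q, hq⟩
  exact hz _ hq

lemma blockSparse_res {S : Finset (Fin R)} {k : ℕ} (hcard : S.card ≤ k)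
    (h : Fin R × Fin Q → ℝ) : BlockSparse Q R k (res S h) :=
  blockSparse_of_support hcard fun _ hp => res_support hp

section RIP
variable {N K : ℕ} {A : Matrix (Fin N) (Fin R × Fin Q) ℝ} {δ : ℝ}

lemma sum_mul_eq (a b : Fin N → ℝ) :
    ∑ i, a i * b i = ((∑ i, (a i + b i) ^ 2) - ∑ i, (a i - b i) ^ 2) / 4 := by
  rw [← Finset.sum_sub_distrib, Finset.sum_div]
  exact Finset.sum_congr rfl fun i _ => by ring

lemma inner_mulVec_le
    (hRIP : ∀ z : Fin R × Fin Q → ℝ, BlockSparse Q R (2 * K) z →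
      (1 - δ) * (∑ p, z p ^ 2) ≤ ∑ i, (A.mulVec z i) ^ 2 ∧
      ∑ i, (A.mulVec z i) ^ 2 ≤ (1 + δ) * (∑ p, z p ^ 2))
    {S T : Finset (Fin R)} (hST : Disjoint S T) (hcard : S.card + T.card ≤ 2 * K)
    {u v : Fin R × Fin Q → ℝ} (hu : ∀ p, u p ≠ 0 → p.1 ∈ S) (hv : ∀ p, v p ≠ 0 → p.1 ∈ T) :
    ∑ i, A.mulVec u i * A.mulVec v i ≤ δ * ((∑ p, u p ^ 2) + ∑ p, v p ^ 2) / 2 := by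
  classical
  have horth : ∀ p, u p * v p = 0 := by
    intro p
    by_cases hup : u p = 0
    · simp [hup]
    · have hpS := hu p hup
      have hvT : p.1 ∉ T := Finset.disjoint_left.1 hST hpS
      have hvp : v p = 0 := by by_contra hc; exact hvT (hv p hc)
      simp [hvp]
  have hsumAdd : ∑ p, (u p + v p) ^ 2 = (∑ p, u p ^ 2) + ∑ p, v p ^ 2 := by
    rw [← Finset.sum_add_distrib]
    exact Finset.sum_congr rfl fun p _ => by nlinarith [horth p]
  have hsumSub : ∑ p, (u p - v p) ^ 2 = (∑ p, u p ^ 2) + ∑ p, v p ^ 2 := by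
    rw [← Finset.sum_add_distrib]
    exact Finset.sum_congr rfl fun p _ => by nlinarith [horth p]
  have hspAdd : BlockSparse Q R (2 * K) (u + v) := by
    refine blockSparse_of_support (S := S ∪ T) (le_trans (Finset.card_union_le _ _) hcard) ?_
    intro p hp
    refine Finset.mem_union.2 ?_
    by_cases hup : u p = 0
    · refine Or.inr (hv p ?_)
      intro hvp
      exact hp (by simp [Pi.add_apply, hup, hvp])
    · exact Or.inl (hu p hup)
  have hspSub : BlockSparse Q R (2 * K) (u - v) := by
    refine blockSparse_of_support (S := S ∪ T) (le_trans (Finset.card_union_le _ _) hcard) ?_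
    intro p hp
    refine Finset.mem_union.2 ?_
    by_cases hup : u p = 0
    · refine Or.inr (hv p ?_)
      intro hvp
      exact hp (by simp [Pi.sub_apply, hup, hvp])
    · exact Or.inl (hu p hup)
  have hAdd := (hRIP (u + v) hspAdd).2
  have hSub := (hRIP (u - v) hspSub).1
  rw [show (∑ p, (u + v) p ^ 2) = ∑ p, (u p + v p) ^ 2 from rfl, hsumAdd] at hAdd
  rw [show (∑ p, (u - v) p ^ 2) = ∑ p, (u p - v p) ^ 2 from rfl, hsumSub] at hSub
  rw [Matrix.mulVec_add] at hAdd
  rw [Matrix.mulVec_sub] at hSub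
  rw [sum_mul_eq]
  have eAdd : ∑ i, (A.mulVec u + A.mulVec v) i ^ 2
      = ∑ i, (A.mulVec u i + A.mulVec v i) ^ 2 := rfl
  have eSub : ∑ i, (A.mulVec u - A.mulVec v) i ^ 2
      = ∑ i, (A.mulVec u i - A.mulVec v i) ^ 2 := rfl
  rw [eAdd] at hAdd
  rw [eSub] at hSub
  linarith

lemma abs_inner_mulVec_le (hδ : 0 ≤ δ)
    (hRIP : ∀ z : Fin R × Fin Q → ℝ, BlockSparse Q R (2 * K) z →
      (1 - δ) * (∑ p, z p ^ 2) ≤ ∑ i, (A.mulVec z i) ^ 2 ∧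
      ∑ i, (A.mulVec z i) ^ 2 ≤ (1 + δ) * (∑ p, z p ^ 2))
    {S T : Finset (Fin R)} (hST : Disjoint S T) (hcard : S.card + T.card ≤ 2 * K)
    {u v : Fin R × Fin Q → ℝ} (hu : ∀ p, u p ≠ 0 → p.1 ∈ S) (hv : ∀ p, v p ≠ 0 → p.1 ∈ T) :
    |∑ i, A.mulVec u i * A.mulVec v i| ≤ δ * euclNorm u * euclNorm v := by
  classical
  have aux : ∀ (u v : Fin R × Fin Q → ℝ), (∀ p, u p ≠ 0 → p.1 ∈ S) →
      (∀ p, v p ≠ 0 → p.1 ∈ T) →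
      ∑ i, A.mulVec u i * A.mulVec v i ≤ δ * euclNorm u * euclNorm v := by
    intro u v hu hv
    by_cases hcu : euclNorm u = 0
    · have : u = 0 := eq_zero_of_euclNorm_eq_zero hcu
      subst this
      simp [Matrix.mulVec_zero, hcu]
    by_cases hcv : euclNorm v = 0
    · have : v = 0 := eq_zero_of_euclNorm_eq_zero hcv
      subst this
      simp [Matrix.mulVec_zero, hcv]
    have hcu' : 0 < euclNorm u := lt_of_le_of_ne (euclNorm_nonneg u) (Ne.symm hcu)
    have hcv' : 0 < euclNorm v := lt_of_le_of_ne (euclNorm_nonneg v) (Ne.symm hcv)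
    set cu := euclNorm u
    set cv := euclNorm v
    have hu' : ∀ p, (cv • u) p ≠ 0 → p.1 ∈ S := by
      intro p hp
      refine hu p fun hz => hp ?_
      simp [Pi.smul_apply, hz]
    have hv' : ∀ p, (cu • v) p ≠ 0 → p.1 ∈ T := by
      intro p hp
      refine hv p fun hz => hp ?_
      simp [Pi.smul_apply, hz]
    have h := inner_mulVec_le hRIP hST hcard hu' hv'
    have e1 : ∑ i, A.mulVec (cv • u) i * A.mulVec (cu • v) i
        = cv * cu * ∑ i, A.mulVec u i * A.mulVec v i := by
      rw [Finset.mul_sum]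
      refine Finset.sum_congr rfl fun i _ => ?_
      rw [Matrix.mulVec_smul, Matrix.mulVec_smul]
      simp [Pi.smul_apply, smul_eq_mul]
      ring
    have e2 : ∑ p, ((cv • u) p) ^ 2 = cv ^ 2 * ∑ p, u p ^ 2 := by
      rw [Finset.mul_sum]
      exact Finset.sum_congr rfl fun p _ => by simp [Pi.smul_apply, smul_eq_mul]; ring
    have e3 : ∑ p, ((cu • v) p) ^ 2 = cu ^ 2 * ∑ p, v p ^ 2 := by
      rw [Finset.mul_sum]
      exact Finset.sum_congr rfl fun p _ => by simp [Pi.smul_apply, smul_eq_mul]; ring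
    rw [e1, e2, e3] at h
    have hsu : ∑ p, u p ^ 2 = cu ^ 2 := (sq_euclNorm u).symm
    have hsv : ∑ p, v p ^ 2 = cv ^ 2 := (sq_euclNorm v).symm
    rw [hsu, hsv] at h
    nlinarith [mul_pos hcu' hcv']
  refine abs_le.2 ⟨?_, aux u v hu hv⟩
  have hv' : ∀ p, (-v) p ≠ 0 → p.1 ∈ T := by
    intro p hp
    exact hv p fun hz => hp (by simp [Pi.neg_apply, hz])
  have h := aux u (-v) hu hv'
  rw [Matrix.mulVec_neg] at h
  have e : ∑ i, A.mulVec u i * (-A.mulVec v) i = -∑ i, A.mulVec u i * A.mulVec v i := by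
    rw [← Finset.sum_neg_distrib]
    exact Finset.sum_congr rfl fun i _ => by simp
  rw [e, euclNorm_neg'] at h
  linarith

end RIP
end BPDN

set_option maxHeartbeats 4000000 in
/-- Block BPDN guarantee for an exactly block `K`-sparse source: if `A` satisfies the block-RIP
of order `2K` with constant `δ < √2 − 1`, `x` is block `K`-sparse, `y = A x + n` with
`‖n‖₂ ≤ ε`, and `x̂` minimizes `∑_r ‖z_r‖₂` subject to `‖y − A z‖₂ ≤ ε`, then
`‖x − x̂‖₂ ≤ 4ε√(1+δ)/(1−(1+√2)δ)`. -/
theorem block_bpdn_recovery_exact (Q R N K : ℕ) (hQ : 1 ≤ Q) (hR : 1 ≤ R) (hN : 1 ≤ N)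
    (hK : 1 ≤ K)
    (A : Matrix (Fin N) (Fin R × Fin Q) ℝ)
    (δ : ℝ) (hδ0 : 0 < δ) (hδ : δ < Real.sqrt 2 - 1)
    (hRIP : ∀ z : Fin R × Fin Q → ℝ, BlockSparse Q R (2 * K) z →
      (1 - δ) * (∑ p, z p ^ 2) ≤ ∑ i, (A.mulVec z i) ^ 2 ∧
      ∑ i, (A.mulVec z i) ^ 2 ≤ (1 + δ) * (∑ p, z p ^ 2))
    (x : Fin R × Fin Q → ℝ) (hx : BlockSparse Q R K x)
    (n : Fin N → ℝ) (ε : ℝ) (hn : euclNorm n ≤ ε)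
    (y : Fin N → ℝ) (hy : y = A.mulVec x + n)
    (xhat : Fin R × Fin Q → ℝ)
    (hfeas : euclNorm (y - A.mulVec xhat) ≤ ε)
    (hmin : ∀ z : Fin R × Fin Q → ℝ, euclNorm (y - A.mulVec z) ≤ ε →
      ∑ r, euclNorm (fun q => xhat (r, q)) ≤ ∑ r, euclNorm (fun q => z (r, q))) :
    euclNorm (x - xhat) ≤ 4 * ε * Real.sqrt (1 + δ) / (1 - (1 + Real.sqrt 2) * δ) := by
  classical
  have sqrt2_sq : Real.sqrt 2 ^ 2 = 2 := Real.sq_sqrt (by norm_num)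
  have sqrt2_nonneg : (0:ℝ) ≤ Real.sqrt 2 := Real.sqrt_nonneg 2
  have hδ1 : δ < 1 := by nlinarith [sq_nonneg (Real.sqrt 2 - 2)]
  have hD : 0 < 1 - (1 + Real.sqrt 2) * δ := by nlinarith
  have hε0 : 0 ≤ ε := le_trans (BPDN.euclNorm_nonneg n) hn
  set h : Fin R × Fin Q → ℝ := x - xhat with hdef
  clear_value h
  -- support of x
  set T0 : Finset (Fin R) := Finset.univ.filter (fun r => ∃ q, x (r, q) ≠ 0) with hT0
  have hT0card : T0.card ≤ K := by
    have hset : {r : Fin R | ∃ q, x (r, q) ≠ 0} = ↑T0 := by ext r; simp [hT0]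
    calc T0.card = (↑T0 : Set (Fin R)).ncard := (Set.ncard_coe_finset T0).symm
    _ ≤ K := by rw [← hset]; exact hx
  have hxT0 : ∀ r : Fin R, r ∉ T0 → ∀ q, x (r, q) = 0 := by
    intro r hr q
    by_contra hc
    exact hr (by simp only [hT0, Finset.mem_filter, Finset.mem_univ, true_and]; exact ⟨q, hc⟩)
  clear_value T0
  -- tube constraint
  have hAh : euclNorm (A.mulVec h) ≤ 2 * ε := by
    have e : A.mulVec h = (y - A.mulVec xhat) - n := by
      rw [hdef, Matrix.mulVec_sub, hy]
      abel
    rw [e]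
    exact le_trans (BPDN.euclNorm_sub_le _ _) (by linarith)
  -- cone constraint
  have hxfeas : euclNorm (y - A.mulVec x) ≤ ε := by
    rw [hy, add_sub_cancel_left]; exact hn
  have hconemin := hmin x hxfeas
  have hcone : ∑ r ∈ T0ᶜ, BPDN.bn h r ≤ ∑ r ∈ T0, BPDN.bn h r := by
    have h1 : ∀ r ∈ T0, euclNorm (fun q => x (r, q)) - BPDN.bn h r
        ≤ euclNorm (fun q => xhat (r, q)) := by
      intro r _
      have heq : (fun q => x (r, q)) = (fun q => xhat (r, q)) + fun q => h (r, q) := by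
        funext q; simp [hdef]
      have tri : euclNorm (fun q => x (r, q))
          ≤ euclNorm (fun q => xhat (r, q)) + BPDN.bn h r := by
        rw [heq]; exact BPDN.euclNorm_add_le _ _
      linarith
    have h2 : ∀ r ∈ T0ᶜ, euclNorm (fun q => xhat (r, q)) = BPDN.bn h r := by
      intro r hr
      have hr' : r ∉ T0 := Finset.mem_compl.1 hr
      have heq : (fun q => xhat (r, q)) = -(fun q => h (r, q)) := by
        funext q; simp [hdef, hxT0 r hr' q]
      rw [heq, BPDN.euclNorm_neg']
      rfl
    have h3 : ∀ r ∈ T0ᶜ, euclNorm (fun q => x (r, q)) = 0 := by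
      intro r hr
      have hr' : r ∉ T0 := Finset.mem_compl.1 hr
      have heq : (fun q => x (r, q)) = (0 : Fin Q → ℝ) := funext fun q => hxT0 r hr' q
      rw [heq, BPDN.euclNorm_zero]
    have split1 : ∑ r ∈ T0, euclNorm (fun q => xhat (r, q))
        + ∑ r ∈ T0ᶜ, euclNorm (fun q => xhat (r, q))
        = ∑ r, euclNorm (fun q => xhat (r, q)) := Finset.sum_add_sum_compl T0 _
    have split2 : ∑ r ∈ T0, euclNorm (fun q => x (r, q))
        + ∑ r ∈ T0ᶜ, euclNorm (fun q => x (r, q))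
        = ∑ r, euclNorm (fun q => x (r, q)) := Finset.sum_add_sum_compl T0 _
    have e2 : ∑ r ∈ T0ᶜ, euclNorm (fun q => xhat (r, q)) = ∑ r ∈ T0ᶜ, BPDN.bn h r :=
      Finset.sum_congr rfl h2
    have e3 : ∑ r ∈ T0ᶜ, euclNorm (fun q => x (r, q)) = 0 :=
      Finset.sum_eq_zero h3
    have e1 : ∑ r ∈ T0, euclNorm (fun q => x (r, q)) - ∑ r ∈ T0, BPDN.bn h r
        ≤ ∑ r ∈ T0, euclNorm (fun q => xhat (r, q)) := by
      rw [← Finset.sum_sub_distrib]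
      exact Finset.sum_le_sum h1
    linarith
  -- the sorted list of blocks outside T0
  set key : Fin R → Fin R → Bool := fun a b => decide (BPDN.bn h b ≤ BPDN.bn h a) with hkey
  set l : List (Fin R) := (Finset.univ \ T0).toList.mergeSort key with hl
  have hperm : l.Perm (Finset.univ \ T0).toList := List.mergeSort_perm _ _
  have hnodup : l.Nodup := hperm.nodup_iff.2 (Finset.nodup_toList _)
  have hmem : ∀ r : Fin R, r ∈ l ↔ r ∉ T0 := by
    intro r
    rw [hperm.mem_iff, Finset.mem_toList, Finset.mem_sdiff]
    simp
  have hsorted : l.Pairwise fun a b => BPDN.bn h b ≤ BPDN.bn h a := by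
    have hs := List.pairwise_mergeSort (le := key)
      (fun a b c hab hbc => by simp only [hkey, decide_eq_true_eq] at *; exact le_trans hbc hab)
      (fun a b => by simp only [hkey, Bool.or_eq_true, decide_eq_true_eq]; exact le_total _ _)
      (Finset.univ \ T0).toList
    rw [← hl] at hs
    exact hs.imp fun hab => by simpa [hkey] using hab
  have hlen : l.length ≤ R := by
    rw [hperm.length_eq, Finset.length_toList]
    exact le_trans (Finset.card_le_univ _) (by simp)
  clear_value key l
  -- chunks
  set c : ℕ → List (Fin R) := fun j => (l.drop (j * K)).take K with hc
  set Ch : ℕ → Finset (Fin R) := fun j => (c j).toFinset with hCh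
  have hcnodup : ∀ j, (c j).Nodup :=
    fun j => hnodup.sublist ((List.take_sublist _ _).trans (List.drop_sublist _ _))
  have hChmem : ∀ j r, r ∈ Ch j → r ∈ c j := by
    intro j r hr; simpa [hCh] using hr
  have hChmem' : ∀ j r, r ∈ c j → r ∈ Ch j := by
    intro j r hr; simp [hCh]; exact hr
  have hChnotT0 : ∀ j r, r ∈ Ch j → r ∉ T0 := by
    intro j r hr
    have hrl : r ∈ l := List.drop_subset _ _ (List.take_subset _ _ (hChmem j r hr))
    exact (hmem r).1 hrl
  have hChcard : ∀ j, (Ch j).card ≤ K := by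
    intro j
    calc (Ch j).card ≤ (c j).length := (c j).toFinset_card_le
    _ ≤ K := List.length_take_le _ _
  have hChdisj : ∀ i j, i < j → Disjoint (Ch i) (Ch j) := by
    intro i j hij
    rw [Finset.disjoint_left]
    intro r hri hrj
    have hK' : i * K + K ≤ j * K := by
      have h1 : (i + 1) * K ≤ j * K := Nat.mul_le_mul_right K hij
      have h2 : (i + 1) * K = i * K + K := by ring
      omega
    have hndrop : (l.drop (i * K)).Nodup := hnodup.sublist (List.drop_sublist _ _)
    have hd1 : List.Disjoint ((l.drop (i * K)).take K) ((l.drop (i * K)).drop K) :=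
      List.disjoint_take_drop hndrop (le_refl K)
    have hrl : r ∈ l.drop (j * K) := List.take_subset _ _ (hChmem j r hrj)
    have hrl2 : r ∈ (l.drop (i * K + K)).drop (j * K - (i * K + K)) := by
      rw [List.drop_drop]
      have : i * K + K + (j * K - (i * K + K)) = j * K := by omega
      rwa [this]
    have hrl3 : r ∈ l.drop (i * K + K) := List.drop_subset _ _ hrl2
    have hrl4 : r ∈ (l.drop (i * K)).drop K := by rwa [List.drop_drop]
    exact hd1 (hChmem i r hri) hrl4
  have hChhl : ∀ j, ∀ a ∈ Ch (j + 1), ∀ b ∈ Ch j, BPDN.bn h a ≤ BPDN.bn h b := by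
    intro j a ha b hb
    have happ := BPDN.pairwise_take_drop hsorted ((j + 1) * K)
    refine happ b ?_ a ?_
    · have htk : l.take ((j + 1) * K) = l.take (j * K) ++ (l.drop (j * K)).take K := by
        rw [← List.take_add]
        congr 1
        ring
      rw [htk, List.mem_append]
      exact Or.inr (hChmem j b hb)
    · exact List.take_subset _ _ (hChmem (j + 1) a ha)
  have hChfull : ∀ j, c (j + 1) ≠ [] → (Ch j).card = K := by
    intro j hne
    have hlt : (j + 1) * K < l.length := by
      by_contra hge
      push_neg at hge
      have hdrop : l.drop ((j + 1) * K) = [] := List.drop_eq_nil_of_le hge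
      exact hne (by simp [hc, hdrop])
    have hlenc : (c j).length = K := by
      simp only [hc, List.length_take, List.length_drop]
      have : (j + 1) * K = j * K + K := by ring
      omega
    rw [hCh]
    rw [List.toFinset_card_of_nodup (hcnodup j), hlenc]
  have hcover : ∀ r : Fin R, r ∉ T0 → ∃ j < R + 1, r ∈ Ch j := by
    intro r hr
    have hlen' : l.length ≤ (R + 1) * K := by
      have h1 : (R + 1) * 1 ≤ (R + 1) * K := Nat.mul_le_mul_left (R + 1) hK
      omega
    obtain ⟨j, hj, hmem'⟩ := BPDN.exists_chunk K (R + 1) l r ((hmem r).2 hr) hlen'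
    exact ⟨j, hj, hChmem' j r hmem'⟩
  clear_value c Ch
  -- decomposition
  set T01 : Finset (Fin R) := T0 ∪ Ch 0 with hT01
  have hdisj0 : Disjoint T0 (Ch 0) :=
    Finset.disjoint_left.2 fun r hr hr0 => (hChnotT0 0 r hr0) hr
  set u : Fin R × Fin Q → ℝ := BPDN.res T01 h with hu
  set w : ℕ → (Fin R × Fin Q → ℝ) := fun j => BPDN.res (Ch (j + 1)) h with hw
  clear_value T01 u w
  have hdecomp : h = u + ∑ j ∈ Finset.range R, w j := by
    funext p
    have hps : (u + ∑ j ∈ Finset.range R, w j) p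
        = u p + ∑ j ∈ Finset.range R, w j p := by
      simp [Finset.sum_apply]
    rw [hps]
    by_cases hp : p.1 ∈ T0
    · have hup : u p = h p := by
        simp [hu, BPDN.res, hT01, Finset.mem_union, hp]
      have hz : ∀ j ∈ Finset.range R, w j p = 0 := by
        intro j _
        have hnc : p.1 ∉ Ch (j + 1) := fun hcc => (hChnotT0 _ _ hcc) hp
        simp [hw, BPDN.res, hnc]
      rw [hup, Finset.sum_eq_zero hz, add_zero]
    · obtain ⟨j0, hj0R, hj0⟩ := hcover p.1 hp
      have huniq : ∀ j', j' ≠ j0 → p.1 ∉ Ch j' := by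
        intro j' hne hcc
        rcases Nat.lt_or_ge j' j0 with hlt | hge
        · exact (Finset.disjoint_left.1 (hChdisj _ _ hlt) hcc) hj0
        · have : j0 < j' := lt_of_le_of_ne hge (Ne.symm hne)
          exact (Finset.disjoint_left.1 (hChdisj _ _ this) hj0) hcc
      cases j0 with
      | zero =>
        have hup : u p = h p := by
          simp [hu, BPDN.res, hT01, Finset.mem_union, hj0]
        have hz : ∀ j ∈ Finset.range R, w j p = 0 := by
          intro j _
          have hnc := huniq (j + 1) (by omega)
          simp [hw, BPDN.res, hnc]
        rw [hup, Finset.sum_eq_zero hz, add_zero]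
      | succ j' =>
        have hj'R : j' ∈ Finset.range R := Finset.mem_range.2 (by omega)
        have hup : u p = 0 := by
          have h0 : p.1 ∉ Ch 0 := huniq 0 (by omega)
          simp [hu, BPDN.res, hT01, Finset.mem_union, hp, h0]
        have hsum : ∑ j ∈ Finset.range R, w j p = w j' p :=
          Finset.sum_eq_single_of_mem j' hj'R (fun j _ hne => by
            have hnc := huniq (j + 1) (by omega)
            simp [hw, BPDN.res, hnc])
        rw [hup, hsum, zero_add]
        simp [hw, BPDN.res, hj0]
  -- norms
  have hT01card : T01.card ≤ 2 * K := by
    have := Finset.card_union_le T0 (Ch 0)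
    have := hChcard 0
    rw [hT01]
    omega
  set a : ℝ := euclNorm (BPDN.res T0 h) with hadef
  set b : ℝ := euclNorm (BPDN.res (Ch 0) h) with hbdef
  set U : ℝ := euclNorm u with hUdef
  clear_value a b U
  have ha0 : 0 ≤ a := by rw [hadef]; exact BPDN.euclNorm_nonneg _
  have hb0 : 0 ≤ b := by rw [hbdef]; exact BPDN.euclNorm_nonneg _
  have hU0 : 0 ≤ U := by rw [hUdef]; exact BPDN.euclNorm_nonneg _
  have hab2 : a ^ 2 + b ^ 2 = U ^ 2 := by
    rw [hadef, hbdef, hUdef, hu, BPDN.euclNorm_res_sq, BPDN.euclNorm_res_sq,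
      BPDN.euclNorm_res_sq, hT01, Finset.sum_union hdisj0]
  have husplit : u = BPDN.res T0 h + BPDN.res (Ch 0) h := by
    rw [hu, hT01, BPDN.res_union hdisj0]
  have hKpos : (0:ℝ) < (K:ℝ) := by exact_mod_cast hK
  have hsKpos : (0:ℝ) < Real.sqrt K := Real.sqrt_pos.2 hKpos
  -- Cauchy-Schwarz on T0
  have hT0bn : ∑ r ∈ T0, BPDN.bn h r ≤ Real.sqrt K * a := by
    have h1 : (∑ r ∈ T0, BPDN.bn h r) ^ 2 ≤ K * a ^ 2 := by
      have hcs := sq_sum_le_card_mul_sum_sq (s := T0) (f := BPDN.bn h)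
      have hcast : (T0.card : ℝ) ≤ (K : ℝ) := by exact_mod_cast hT0card
      have he : a ^ 2 = ∑ r ∈ T0, BPDN.bn h r ^ 2 := by
        rw [hadef, BPDN.euclNorm_res_sq]
      rw [he]
      have hnn : 0 ≤ ∑ r ∈ T0, BPDN.bn h r ^ 2 :=
        Finset.sum_nonneg fun r _ => sq_nonneg _
      nlinarith
    refine BPDN.le_of_sq_le_sq (mul_nonneg (Real.sqrt_nonneg _) ha0) ?_
    rw [mul_pow, Real.sq_sqrt (le_of_lt hKpos)]
    exact h1
  -- chunk tail bound
  set tail : ℝ := ∑ j ∈ Finset.range R, euclNorm (w j) with htaildef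
  clear_value tail
  have hwbound : ∀ j, euclNorm (w j) ≤ (∑ r ∈ Ch j, BPDN.bn h r) / Real.sqrt K := by
    intro j
    have hSnn : 0 ≤ ∑ r ∈ Ch j, BPDN.bn h r :=
      Finset.sum_nonneg fun r _ => BPDN.bn_nonneg h r
    by_cases hne : c (j + 1) = []
    · have hCe : Ch (j + 1) = ∅ := by simp [hCh, hne]
      have hwz : w j = 0 := by funext p; simp [hw, BPDN.res, hCe]
      rw [hwz, BPDN.euclNorm_zero]
      exact div_nonneg hSnn (Real.sqrt_nonneg _)
    · have hcard : (Ch j).card = K := hChfull j hne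
      have hbnle : ∀ a' ∈ Ch (j + 1), (K:ℝ) * BPDN.bn h a' ≤ ∑ r ∈ Ch j, BPDN.bn h r := by
        intro a' ha'
        calc (K:ℝ) * BPDN.bn h a' = ∑ _r ∈ Ch j, BPDN.bn h a' := by
              rw [Finset.sum_const, hcard]; simp [nsmul_eq_mul]
        _ ≤ _ := Finset.sum_le_sum fun r hr => hChhl j a' ha' r hr
      have hsq : euclNorm (w j) ^ 2 ≤ (∑ r ∈ Ch j, BPDN.bn h r) ^ 2 / K := by
        have he : euclNorm (w j) ^ 2 = ∑ r ∈ Ch (j + 1), BPDN.bn h r ^ 2 := by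
          rw [hw, BPDN.euclNorm_res_sq]
        rw [he]
        have each : ∀ r ∈ Ch (j + 1),
            BPDN.bn h r ^ 2 ≤ ((∑ r ∈ Ch j, BPDN.bn h r) / K) ^ 2 := by
          intro r hr
          have h1 := hbnle r hr
          have h2 := BPDN.bn_nonneg h r
          rw [div_pow, le_div_iff₀ (by positivity)]
          nlinarith [mul_nonneg (sub_nonneg.2 h1) (mul_nonneg (le_of_lt hKpos) h2)]
        calc ∑ r ∈ Ch (j + 1), BPDN.bn h r ^ 2
            ≤ ∑ _r ∈ Ch (j + 1), ((∑ r ∈ Ch j, BPDN.bn h r) / K) ^ 2 :=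
              Finset.sum_le_sum each
        _ = (Ch (j + 1)).card * ((∑ r ∈ Ch j, BPDN.bn h r) / K) ^ 2 := by
              rw [Finset.sum_const]; simp [nsmul_eq_mul]
        _ ≤ K * ((∑ r ∈ Ch j, BPDN.bn h r) / K) ^ 2 := by
              have hcc : ((Ch (j + 1)).card : ℝ) ≤ (K : ℝ) := by
                exact_mod_cast hChcard (j + 1)
              have : 0 ≤ ((∑ r ∈ Ch j, BPDN.bn h r) / K) ^ 2 := sq_nonneg _
              nlinarith
        _ = (∑ r ∈ Ch j, BPDN.bn h r) ^ 2 / K := by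
              field_simp
      refine BPDN.le_of_sq_le_sq (div_nonneg hSnn (Real.sqrt_nonneg _)) ?_
      rw [div_pow, Real.sq_sqrt (le_of_lt hKpos)]
      exact hsq
  have hchunksum : ∑ j ∈ Finset.range (R + 1), ∑ r ∈ Ch j, BPDN.bn h r
      = ∑ r ∈ T0ᶜ, BPDN.bn h r := by
    have hpd : (↑(Finset.range (R + 1)) : Set ℕ).PairwiseDisjoint Ch := by
      intro i _ j _ hij
      rcases Nat.lt_or_ge i j with hlt | hge
      · exact hChdisj i j hlt
      · exact (hChdisj j i (lt_of_le_of_ne hge (Ne.symm hij))).symm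
    rw [← Finset.sum_biUnion hpd]
    congr 1
    ext r
    simp only [Finset.mem_biUnion, Finset.mem_range, Finset.mem_compl]
    constructor
    · rintro ⟨j, _, hr⟩
      exact hChnotT0 j r hr
    · intro hr
      obtain ⟨j, hj, hr'⟩ := hcover r hr
      exact ⟨j, hj, hr'⟩
  have htail_le : tail ≤ a := by
    have h1 : tail ≤ (∑ j ∈ Finset.range R, ∑ r ∈ Ch j, BPDN.bn h r) / Real.sqrt K := by
      rw [htaildef, Finset.sum_div]
      exact Finset.sum_le_sum fun j _ => hwbound j
    have h2 : ∑ j ∈ Finset.range R, ∑ r ∈ Ch j, BPDN.bn h r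
        ≤ ∑ r ∈ T0ᶜ, BPDN.bn h r := by
      rw [← hchunksum]
      exact Finset.sum_le_sum_of_subset_of_nonneg
        (Finset.range_subset_range.2 (by omega))
        (fun j _ _ => Finset.sum_nonneg fun r _ => BPDN.bn_nonneg h r)
    have h3 : (∑ r ∈ T0ᶜ, BPDN.bn h r) ≤ Real.sqrt K * a := le_trans hcone hT0bn
    calc tail ≤ (∑ j ∈ Finset.range R, ∑ r ∈ Ch j, BPDN.bn h r) / Real.sqrt K := h1
    _ ≤ (Real.sqrt K * a) / Real.sqrt K := (div_le_div_iff_of_pos_right hsKpos).2 (by linarith)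
    _ = a := by field_simp
  have ha_le_U : a ≤ U := BPDN.le_of_sq_le_sq hU0 (by nlinarith [sq_nonneg b])
  have htailU : tail ≤ U := le_trans htail_le ha_le_U
  -- RIP on u
  have hspU : BlockSparse Q R (2 * K) u := by
    rw [hu]; exact BPDN.blockSparse_res hT01card h
  have hRIPu := hRIP u hspU
  have hsumU : ∑ p, u p ^ 2 = U ^ 2 := by rw [hUdef, BPDN.sq_euclNorm]
  have hAuU : euclNorm (A.mulVec u) ≤ Real.sqrt (1 + δ) * U := by
    refine BPDN.le_of_sq_le_sq (mul_nonneg (Real.sqrt_nonneg _) hU0) ?_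
    rw [mul_pow, Real.sq_sqrt (by linarith : (0:ℝ) ≤ 1 + δ), BPDN.sq_euclNorm]
    calc ∑ i, A.mulVec u i ^ 2 ≤ (1 + δ) * ∑ p, u p ^ 2 := hRIPu.2
    _ = (1 + δ) * U ^ 2 := by rw [hsumU]
  -- inner product expansion
  have hAh_decomp : A.mulVec h
      = A.mulVec u + ∑ j ∈ Finset.range R, A.mulVec (w j) := by
    conv_lhs => rw [hdecomp]
    rw [Matrix.mulVec_add]
    congr 1
    rw [← Matrix.mulVecLin_apply, map_sum]
    simp only [Matrix.mulVecLin_apply]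
  have hinner_split : ∑ i, A.mulVec u i * A.mulVec h i
      = (∑ i, A.mulVec u i ^ 2)
        + ∑ j ∈ Finset.range R, ∑ i, A.mulVec u i * A.mulVec (w j) i := by
    rw [hAh_decomp]
    have hterm : ∀ i, A.mulVec u i * (A.mulVec u + ∑ j ∈ Finset.range R, A.mulVec (w j)) i
        = A.mulVec u i ^ 2 + ∑ j ∈ Finset.range R, A.mulVec u i * A.mulVec (w j) i := by
      intro i
      rw [Pi.add_apply, Finset.sum_apply, mul_add, Finset.mul_sum]
      ring
    rw [Finset.sum_congr rfl fun i _ => hterm i, Finset.sum_add_distrib]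
    congr 1
    rw [Finset.sum_comm]
  -- cross terms
  have hcross : ∀ j ∈ Finset.range R, |∑ i, A.mulVec u i * A.mulVec (w j) i|
      ≤ δ * (a + b) * euclNorm (w j) := by
    intro j _
    have e : ∑ i, A.mulVec u i * A.mulVec (w j) i
        = (∑ i, A.mulVec (BPDN.res T0 h) i * A.mulVec (w j) i)
          + ∑ i, A.mulVec (BPDN.res (Ch 0) h) i * A.mulVec (w j) i := by
      rw [← Finset.sum_add_distrib]
      refine Finset.sum_congr rfl fun i _ => ?_
      rw [show A.mulVec u i = A.mulVec (BPDN.res T0 h) i + A.mulVec (BPDN.res (Ch 0) h) i by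
        rw [husplit, Matrix.mulVec_add, Pi.add_apply]]
      ring
    rw [e]
    have hd1 : Disjoint T0 (Ch (j + 1)) :=
      Finset.disjoint_left.2 fun r hr hcc => hChnotT0 _ _ hcc hr
    have hd2 : Disjoint (Ch 0) (Ch (j + 1)) := hChdisj 0 (j + 1) (by omega)
    have hcard1 : T0.card + (Ch (j + 1)).card ≤ 2 * K := by
      have := hChcard (j + 1); omega
    have hcard2 : (Ch 0).card + (Ch (j + 1)).card ≤ 2 * K := by
      have := hChcard 0; have := hChcard (j + 1); omega
    have hwsupp : ∀ p, w j p ≠ 0 → p.1 ∈ Ch (j + 1) := by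
      intro p hp
      exact BPDN.res_support (by rwa [hw] at hp)
    have hb1 := BPDN.abs_inner_mulVec_le (u := BPDN.res T0 h) (v := w j)
      (le_of_lt hδ0) hRIP hd1 hcard1 (fun p hp => BPDN.res_support hp) hwsupp
    have hb2 := BPDN.abs_inner_mulVec_le (u := BPDN.res (Ch 0) h) (v := w j)
      (le_of_lt hδ0) hRIP hd2 hcard2 (fun p hp => BPDN.res_support hp) hwsupp
    have hwe : euclNorm (w j) = euclNorm (BPDN.res (Ch (j + 1)) h) := by rw [hw]
    calc |(∑ i, A.mulVec (BPDN.res T0 h) i * A.mulVec (w j) i)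
          + ∑ i, A.mulVec (BPDN.res (Ch 0) h) i * A.mulVec (w j) i|
        ≤ |∑ i, A.mulVec (BPDN.res T0 h) i * A.mulVec (w j) i|
          + |∑ i, A.mulVec (BPDN.res (Ch 0) h) i * A.mulVec (w j) i| := abs_add_le _ _
    _ ≤ δ * a * euclNorm (w j) + δ * b * euclNorm (w j) := by
        refine add_le_add ?_ ?_
        · rw [hadef]
          exact hb1
        · rw [hbdef]
          exact hb2
    _ = δ * (a + b) * euclNorm (w j) := by ring
  have hcross_sum : ∑ j ∈ Finset.range R, |∑ i, A.mulVec u i * A.mulVec (w j) i|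
      ≤ δ * (a + b) * tail := by
    rw [htaildef, Finset.mul_sum]
    exact Finset.sum_le_sum hcross
  have hab_sqrt2 : a + b ≤ Real.sqrt 2 * U := by
    refine BPDN.le_of_sq_le_sq (mul_nonneg sqrt2_nonneg hU0) ?_
    rw [mul_pow, sqrt2_sq]
    nlinarith [sq_nonneg (a - b)]
  -- main inequality
  have htail0 : 0 ≤ tail := by
    rw [htaildef]
    exact Finset.sum_nonneg fun j _ => BPDN.euclNorm_nonneg _
  have hmain : (1 - δ) * U ^ 2 ≤ Real.sqrt (1 + δ) * U * (2 * ε) + Real.sqrt 2 * δ * U ^ 2 := by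
    have h1 : (1 - δ) * U ^ 2 ≤ ∑ i, A.mulVec u i ^ 2 := by
      rw [← hsumU]; exact hRIPu.1
    have h3 : ∑ i, A.mulVec u i * A.mulVec h i ≤ Real.sqrt (1 + δ) * U * (2 * ε) := by
      calc ∑ i, A.mulVec u i * A.mulVec h i
          ≤ |∑ i, A.mulVec u i * A.mulVec h i| := le_abs_self _
      _ ≤ euclNorm (A.mulVec u) * euclNorm (A.mulVec h) := BPDN.abs_inner_le _ _
      _ ≤ (Real.sqrt (1 + δ) * U) * (2 * ε) := by
          apply mul_le_mul hAuU hAh (BPDN.euclNorm_nonneg _)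
            (mul_nonneg (Real.sqrt_nonneg _) hU0)
    have h4 : -(∑ j ∈ Finset.range R, ∑ i, A.mulVec u i * A.mulVec (w j) i)
        ≤ δ * (a + b) * tail := by
      calc -(∑ j ∈ Finset.range R, ∑ i, A.mulVec u i * A.mulVec (w j) i)
          ≤ |∑ j ∈ Finset.range R, ∑ i, A.mulVec u i * A.mulVec (w j) i| := neg_le_abs _
      _ ≤ ∑ j ∈ Finset.range R, |∑ i, A.mulVec u i * A.mulVec (w j) i| :=
          Finset.abs_sum_le_sum_abs _ _
      _ ≤ δ * (a + b) * tail := hcross_sum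
    have h5 : δ * (a + b) * tail ≤ δ * (Real.sqrt 2 * U) * U := by
      have hab0 : 0 ≤ a + b := by linarith
      calc δ * (a + b) * tail ≤ δ * (Real.sqrt 2 * U) * tail := by
            apply mul_le_mul_of_nonneg_right ?_ htail0
            exact mul_le_mul_of_nonneg_left hab_sqrt2 (le_of_lt hδ0)
      _ ≤ δ * (Real.sqrt 2 * U) * U := by
            apply mul_le_mul_of_nonneg_left htailU
            exact mul_nonneg (le_of_lt hδ0) (mul_nonneg sqrt2_nonneg hU0)
    have h6 : δ * (Real.sqrt 2 * U) * U = Real.sqrt 2 * δ * U ^ 2 := by ring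
    linarith [hinner_split]
  -- conclude
  have hUb : U ≤ 2 * ε * Real.sqrt (1 + δ) / (1 - (1 + Real.sqrt 2) * δ) := by
    rcases eq_or_lt_of_le hU0 with hUz | hUz
    · rw [← hUz]
      exact div_nonneg (by positivity) (le_of_lt hD)
    · rw [le_div_iff₀ hD]
      nlinarith [hmain, hUz]
  have hfinal : euclNorm h ≤ 2 * U := by
    calc euclNorm h = euclNorm (u + ∑ j ∈ Finset.range R, w j) := by rw [← hdecomp]
    _ ≤ U + euclNorm (∑ j ∈ Finset.range R, w j) := by
        rw [hUdef]
        exact BPDN.euclNorm_add_le _ _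
    _ ≤ U + tail := by
        have := BPDN.euclNorm_sum_le (Finset.range R) w
        rw [htaildef]
        linarith
    _ ≤ 2 * U := by linarith
  calc euclNorm h ≤ 2 * U := hfinal
  _ ≤ 2 * (2 * ε * Real.sqrt (1 + δ) / (1 - (1 + Real.sqrt 2) * δ)) := by linarith
  _ = 4 * ε * Real.sqrt (1 + δ) / (1 - (1 + Real.sqrt 2) * δ) := by ring
end
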